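/- Let U be a finite nonempty type and let p, q be strictly positive pmfs on U. Define Z(λ) = Σ_{u∈U} p(u)^{1−λ} q(u)^λ and the tilted pmf P_λ(u) = p(u)^{1−λ} q(u)^λ / Z(λ). Then for every λ ∈ ℝ, the function g(λ) = −log Z(λ) is differentiable at λ with derivative g′(λ) = D(P_λ ‖ q) − D(P_λ ‖ p). -/

import Mathlib

/-- the Chernoff divergence `g(λ) = −log Z(λ)` with
`Z(λ) = ∑ u, p(u)^(1−λ) q(u)^λ` is differentiable everywhere, with derivative
`g′(λ) = D(P_λ‖q) − D(P_λ‖p)` where `P_λ` is the tilted pmf. -/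
theorem stmt8 {U : Type*} [Fintype U] [Nonempty U]
    (p q : U → ℝ)
    (hp0 : ∀ u, 0 < p u) (hp1 : ∑ u, p u = 1)
    (hq0 : ∀ u, 0 < q u) (hq1 : ∑ u, q u = 1)
    (Z : ℝ → ℝ)
    (hZ : ∀ lam, Z lam = ∑ u, p u ^ (1 - lam) * q u ^ lam)
    (P : ℝ → U → ℝ)
    (hP : ∀ lam u, P lam u = p u ^ (1 - lam) * q u ^ lam / Z lam)
    (lam : ℝ) :
    HasDerivAt (fun l => -Real.log (Z l))
      ((∑ u, P lam u * Real.log (P lam u / q u)) -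
        ∑ u, P lam u * Real.log (P lam u / p u)) lam := by
  have hterm : ∀ (l : ℝ) (u : U), 0 < p u ^ (1 - l) * q u ^ l := fun l u =>
    mul_pos (Real.rpow_pos_of_pos (hp0 u) _) (Real.rpow_pos_of_pos (hq0 u) _)
  have hZpos : ∀ l, 0 < Z l := fun l => by
    rw [hZ]
    exact Finset.sum_pos (fun u _ => hterm l u) Finset.univ_nonempty
  set Z' : ℝ := ∑ u, p u ^ (1 - lam) * q u ^ lam * (Real.log (q u) - Real.log (p u))
    with hZ'def
  have hdZ : HasDerivAt Z Z' lam := by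
    have h : ∀ u : U, HasDerivAt (fun l => p u ^ (1 - l) * q u ^ l)
        (p u ^ (1 - lam) * q u ^ lam * (Real.log (q u) - Real.log (p u))) lam := by
      intro u
      have hrw : ∀ l : ℝ, p u ^ (1 - l) * q u ^ l
          = Real.exp (Real.log (p u) * (1 - l) + Real.log (q u) * l) := by
        intro l
        rw [Real.exp_add, Real.rpow_def_of_pos (hp0 u), Real.rpow_def_of_pos (hq0 u)]
      have hlin : HasDerivAt (fun l : ℝ => Real.log (p u) * (1 - l) + Real.log (q u) * l)
          (Real.log (q u) - Real.log (p u)) lam := by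
        have h1 : HasDerivAt (fun l : ℝ => Real.log (p u) * (1 - l)) (-Real.log (p u)) lam := by
          have := ((hasDerivAt_id lam).const_sub 1).const_mul (Real.log (p u))
          simpa using this
        have h2 : HasDerivAt (fun l : ℝ => Real.log (q u) * l) (Real.log (q u)) lam := by
          simpa using (hasDerivAt_id lam).const_mul (Real.log (q u))
        simpa [sub_eq_neg_add, add_comm] using h1.fun_add h2
      have := hlin.exp
      simp only [← hrw] at this
      exact this
    have hsum := HasDerivAt.fun_sum (u := Finset.univ) (fun u _ => h u)
    have hfun : (fun l => ∑ u, p u ^ (1 - l) * q u ^ l) = Z := by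
      funext l; rw [hZ]
    rw [hfun] at hsum
    simpa [hZ'def] using hsum
  have hmain : HasDerivAt (fun l => -Real.log (Z l)) (-(Z' / Z lam)) lam :=
    (hdZ.log (ne_of_gt (hZpos lam))).neg
  convert hmain using 1
  have hZne : Z lam ≠ 0 := ne_of_gt (hZpos lam)
  have hsum : (∑ u, P lam u * Real.log (P lam u / q u)) -
      ∑ u, P lam u * Real.log (P lam u / p u)
      = ∑ u, P lam u * (Real.log (p u) - Real.log (q u)) := by
    rw [← Finset.sum_sub_distrib]
    apply Finset.sum_congr rfl
    intro u _
    have hPpos : 0 < P lam u := by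
      rw [hP]; exact div_pos (hterm lam u) (hZpos lam)
    rw [Real.log_div (ne_of_gt hPpos) (ne_of_gt (hq0 u)),
        Real.log_div (ne_of_gt hPpos) (ne_of_gt (hp0 u))]
    ring
  rw [hsum]
  rw [hZ'def, ← neg_div, ← Finset.sum_neg_distrib, Finset.sum_div]
  apply Finset.sum_congr rfl
  intro u _
  rw [hP]
  field_simp
  ring
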